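/- Let μ > 0 and κ > 1, and define f^{sc} on the real Hilbert space ℓ² of square-summable sequences (x_i)_{i≥1} by f^{sc}(x) = (μ(κ-1)/8)·( (x₁ - 1)² + Σ_{i=1}^{∞}(x_i - x_{i+1})² ) + (μ/2)·‖x‖₂². Let q = (√κ - 1)/(√κ + 1) and let x* ∈ ℓ² be the sequence with x*_i = q^i. Then x* is the global minimizer of f^{sc}; moreover, for every T ≥ 1 and every x ∈ ℓ² with x_i = 0 for all i ≥ T, we have f^{sc}(x) - f^{sc}(x*) ≥ (μ/2)·q^{2T}·‖x*‖₂². -/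

import Mathlib

/-- Nesterov's hard instance for smooth strongly convex minimization, on the Hilbert
space `ℓ²` of square-summable real sequences. In Lean's 0-indexing, `x i` is the math
variable `x_{i+1}` (`i ≥ 1` in the paper):
`f^{sc}(x) = (μ(κ-1)/8)·((x₁ - 1)² + Σ_{i≥1} (x_i - x_{i+1})²) + (μ/2)·‖x‖₂²`. -/
noncomputable def fsc (μ κ : ℝ) (x : lp (fun _ : ℕ => ℝ) 2) : ℝ :=
  (μ * (κ - 1) / 8) * ((x 0 - 1) ^ 2 + ∑' i : ℕ, (x i - x (i + 1)) ^ 2)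
    + (μ / 2) * ‖x‖ ^ 2

private lemma abs_mul_le_half (a b : ℝ) : |a * b| ≤ (a ^ 2 + b ^ 2) / 2 := by
  rw [abs_mul]
  nlinarith [sq_abs a, sq_abs b, sq_nonneg (|a| - |b|), abs_nonneg a, abs_nonneg b]

private lemma sq_summable (x : lp (fun _ : ℕ => ℝ) 2) : Summable fun i => (x i) ^ 2 := by
  have h := lp.summable_inner (𝕜 := ℝ) x x
  simpa [RCLike.inner_apply, sq] using h

private lemma norm_sq_eq (x : lp (fun _ : ℕ => ℝ) 2) : ‖x‖ ^ 2 = ∑' i, (x i) ^ 2 := by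
  rw [← real_inner_self_eq_norm_sq, lp.inner_eq_tsum]
  simp [RCLike.inner_apply, sq]

private lemma summable_mul_of_sq (f g : ℕ → ℝ) (hf : Summable fun i => (f i) ^ 2)
    (hg : Summable fun i => (g i) ^ 2) : Summable fun i => f i * g i := by
  apply Summable.of_abs
  apply Summable.of_nonneg_of_le (fun i => abs_nonneg _)
    (fun i => abs_mul_le_half (f i) (g i))
  exact ((hf.add hg).div_const 2)

set_option maxHeartbeats 1000000 in
private lemma main_id (μ κ q : ℝ) (hq0 : 0 < q) (hq1 : q < 1)
    (hkey : 2 * (μ * (κ - 1) / 8) * (1 - q) ^ 2 = μ * q)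
    (xstar : lp (fun _ : ℕ => ℝ) 2) (hxstar : ∀ i : ℕ, xstar i = q ^ (i + 1))
    (x : lp (fun _ : ℕ => ℝ) 2) :
    fsc μ κ x - fsc μ κ xstar =
      (μ * (κ - 1) / 8) * (((x - xstar) 0) ^ 2
        + ∑' i : ℕ, ((x - xstar) i - (x - xstar) (i + 1)) ^ 2)
      + (μ / 2) * ‖x - xstar‖ ^ 2 := by
  set a : ℝ := μ * (κ - 1) / 8 with ha
  set y : lp (fun _ : ℕ => ℝ) 2 := x - xstar with hy
  have hyi : ∀ i : ℕ, y i = x i - xstar i := fun i => by simp [hy]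
  have hxi : ∀ i : ℕ, x i = y i + q ^ (i + 1) := by
    intro i; rw [hyi i, hxstar i]; ring
  -- geometric summabilities
  have hq2 : (0:ℝ) ≤ q ^ 2 := sq_nonneg q
  have hq21 : q ^ 2 < 1 := by nlinarith
  have sgeo : Summable fun i : ℕ => (q ^ 2 : ℝ) ^ i := summable_geometric_of_lt_one hq2 hq21
  have sg2 : Summable fun i : ℕ => ((q : ℝ) ^ i) ^ 2 := by
    have h : (fun i : ℕ => ((q : ℝ) ^ i) ^ 2) = fun i : ℕ => (q ^ 2 : ℝ) ^ i := by
      funext i; rw [← pow_mul, ← pow_mul, Nat.mul_comm]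
    rw [h]; exact sgeo
  -- lp summabilities
  have s1 : Summable fun i => (y i) ^ 2 := sq_summable y
  have s2 : Summable fun i => (y (i + 1)) ^ 2 := by
    exact (summable_nat_add_iff 1).2 s1
  have s3 : Summable fun i => (y i - y (i + 1)) ^ 2 := by
    apply Summable.of_nonneg_of_le (fun i => sq_nonneg _)
      (fun i => by nlinarith [sq_nonneg (y i + y (i+1))])
      (((s1.add s2)).mul_left 2)
  have s4 : Summable fun i => y i * q ^ i := summable_mul_of_sq _ _ s1 sg2
  have s5 : Summable fun i => y i * q ^ (i + 1) := by
    have h : (fun i : ℕ => y i * q ^ (i + 1)) = fun i => q * (y i * q ^ i) := by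
      funext i; rw [pow_succ]; ring
    rw [h]; exact s4.mul_left q
  have s6' : Summable fun i : ℕ => y (i + 1) * q ^ (i + 1) := by
    have := (summable_nat_add_iff (f := fun i => y i * q ^ i) 1).2 s4
    simpa using this
  have s7 : Summable fun i => (y i - y (i + 1)) * q ^ (i + 1) := by
    have h : (fun i : ℕ => (y i - y (i + 1)) * q ^ (i + 1)) =
        fun i => y i * q ^ (i + 1) - y (i + 1) * q ^ (i + 1) := by
      funext i; ring
    rw [h]; exact s5.sub s6'
  have s8 : Summable fun i : ℕ => ((q : ℝ) ^ (i + 1) - q ^ (i + 2)) ^ 2 := by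
    have h : (fun i : ℕ => ((q : ℝ) ^ (i + 1) - q ^ (i + 2)) ^ 2) =
        fun i : ℕ => ((1 - q) ^ 2 * q ^ 2) * ((q ^ 2 : ℝ) ^ i) := by
      funext i
      rw [show ((q:ℝ)^2)^i = (q^i)^2 by rw [← pow_mul, ← pow_mul, Nat.mul_comm]]
      ring
    rw [h]; exact sgeo.mul_left _
  -- key scalar quantities
  set S : ℝ := ∑' i : ℕ, y i * q ^ i with hS
  set Qy : ℝ := ∑' i : ℕ, (y i - y (i + 1)) ^ 2 with hQy
  set C : ℝ := ∑' i : ℕ, ((q : ℝ) ^ (i + 1) - q ^ (i + 2)) ^ 2 with hC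
  -- shifted sum
  have hshift : ∑' i : ℕ, y (i + 1) * q ^ (i + 1) = S - y 0 := by
    have h0 := Summable.tsum_eq_zero_add s4
    simp only [pow_zero, mul_one] at h0
    rw [hS, h0]; ring
  have hqS : ∑' i : ℕ, y i * q ^ (i + 1) = q * S := by
    have h : (fun i : ℕ => y i * q ^ (i + 1)) = fun i => q * (y i * q ^ i) := by
      funext i; rw [pow_succ]; ring
    rw [h, tsum_mul_left]
  have hW : ∑' i : ℕ, (y i - y (i + 1)) * q ^ (i + 1) = q * S - (S - y 0) := by
    have h : (fun i : ℕ => (y i - y (i + 1)) * q ^ (i + 1)) =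
        fun i => y i * q ^ (i + 1) - y (i + 1) * q ^ (i + 1) := by
      funext i; ring
    rw [h, Summable.tsum_sub s5 s6', hqS, hshift]
  -- norm expansion
  have hxsum : x = y + xstar := by rw [hy]; abel
  have hinner : (inner ℝ y xstar : ℝ) = q * S := by
    rw [lp.inner_eq_tsum]
    simp only [RCLike.inner_apply, conj_trivial]
    rw [show (fun i => xstar i * y i) = fun i : ℕ => y i * q ^ (i + 1) by
      funext i; rw [hxstar i, mul_comm]]
    exact hqS
  have e1 : ‖x‖ ^ 2 = ‖y‖ ^ 2 + 2 * (q * S) + ‖xstar‖ ^ 2 := by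
    rw [hxsum, norm_add_sq_real, hinner]
  -- quadratic expansion of difference sums
  have e2 : ∑' i : ℕ, (x i - x (i + 1)) ^ 2 =
      Qy + (2 * (1 - q)) * (q * S - (S - y 0)) + C := by
    have hterm : (fun i : ℕ => (x i - x (i + 1)) ^ 2) = fun i =>
        (y i - y (i + 1)) ^ 2 + (2 * (1 - q)) * ((y i - y (i + 1)) * q ^ (i + 1))
          + ((q : ℝ) ^ (i + 1) - q ^ (i + 2)) ^ 2 := by
      funext i; rw [hxi i, hxi (i + 1)]; ring
    rw [hterm, Summable.tsum_add (s3.add (s7.mul_left _)) s8, Summable.tsum_add s3 (s7.mul_left _),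
      tsum_mul_left, hW]
  have e3 : ∑' i : ℕ, (xstar i - xstar (i + 1)) ^ 2 = C := by
    rw [hC]
    congr 1; funext i; rw [hxstar i, hxstar (i + 1)]
  have e4 : x 0 = y 0 + q := by rw [hxi 0, pow_one]
  have e5 : xstar 0 = q := by rw [hxstar 0, pow_one]
  -- put it together
  simp only [fsc, ← ha, ← hy, e1, e2, e3, e4, e5, ← hQy]
  linear_combination (-S) * hkey

set_option maxHeartbeats 1000000 in
/-- with `q = (√κ - 1)/(√κ + 1)`, the sequence `x*_i = q^i` is the global
minimizer of `f^{sc}`, and for every `T ≥ 1` and every `x ∈ ℓ²` with `x_i = 0` for all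
`i ≥ T` (1-indexed), `f^{sc}(x) - f^{sc}(x*) ≥ (μ/2)·q^{2T}·‖x*‖₂²`. -/
theorem stmt_19 (μ κ : ℝ) (hμ : 0 < μ) (hκ : 1 < κ)
    (q : ℝ) (hq : q = (Real.sqrt κ - 1) / (Real.sqrt κ + 1))
    (xstar : lp (fun _ : ℕ => ℝ) 2) (hxstar : ∀ i : ℕ, xstar i = q ^ (i + 1)) :
    (∀ x : lp (fun _ : ℕ => ℝ) 2, fsc μ κ xstar ≤ fsc μ κ x) ∧
    ∀ (T : ℕ), 1 ≤ T → ∀ x : lp (fun _ : ℕ => ℝ) 2,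
      (∀ i : ℕ, T ≤ i + 1 → x i = 0) →
      (μ / 2) * q ^ (2 * T) * ‖xstar‖ ^ 2 ≤ fsc μ κ x - fsc μ κ xstar := by
  have hs1 : 1 < Real.sqrt κ := by
    rw [show (1:ℝ) = Real.sqrt 1 by simp]
    exact Real.sqrt_lt_sqrt (by norm_num) hκ
  have hs2 : Real.sqrt κ ^ 2 = κ := Real.sq_sqrt (by linarith)
  have hq0 : 0 < q := by
    rw [hq]; apply div_pos <;> linarith
  have hq1 : q < 1 := by
    rw [hq, div_lt_one (by linarith)]; linarith
  have hkey : 2 * (μ * (κ - 1) / 8) * (1 - q) ^ 2 = μ * q := by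
    rw [hq]
    have hd : Real.sqrt κ + 1 ≠ 0 := by positivity
    field_simp
    linear_combination (-8) * hs2
  have hq2 : (0:ℝ) ≤ q ^ 2 := sq_nonneg q
  have hq21 : q ^ 2 < 1 := by nlinarith
  have hinv : (0:ℝ) < (1 - q ^ 2)⁻¹ := by
    apply inv_pos.2; linarith
  have ha : (0:ℝ) ≤ μ * (κ - 1) / 8 := by
    apply div_nonneg _ (by norm_num)
    nlinarith
  have lower : ∀ x : lp (fun _ : ℕ => ℝ) 2,
      (μ / 2) * ‖x - xstar‖ ^ 2 ≤ fsc μ κ x - fsc μ κ xstar := by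
    intro x
    rw [main_id μ κ q hq0 hq1 hkey xstar hxstar x]
    have hQ : (0:ℝ) ≤ ∑' i : ℕ, ((x - xstar) i - (x - xstar) (i + 1)) ^ 2 :=
      tsum_nonneg fun i => sq_nonneg _
    nlinarith [mul_nonneg ha (add_nonneg (sq_nonneg ((x - xstar) 0)) hQ)]
  -- norm of xstar
  have hns : ‖xstar‖ ^ 2 = q ^ 2 * (1 - q ^ 2)⁻¹ := by
    rw [norm_sq_eq xstar]
    have h : (fun i : ℕ => (xstar i) ^ 2) = fun i : ℕ => q ^ 2 * (q ^ 2 : ℝ) ^ i := by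
      funext i
      rw [hxstar i, ← pow_mul, ← pow_mul, ← pow_add]
      congr 1; omega
    rw [h, tsum_mul_left, tsum_geometric_of_lt_one hq2 hq21]
  constructor
  · intro x
    have h := lower x
    nlinarith [norm_nonneg (x - xstar), sq_nonneg ‖x - xstar‖]
  · intro T hT x hx
    set y : lp (fun _ : ℕ => ℝ) 2 := x - xstar with hy
    have s1 : Summable fun i => (y i) ^ 2 := sq_summable y
    have htail := Summable.sum_add_tsum_nat_add (T - 1) s1
    have hterm : (fun i : ℕ => (y (i + (T - 1))) ^ 2) =
        fun i : ℕ => q ^ (2 * T) * (q ^ 2 : ℝ) ^ i := by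
      funext i
      have hxz : x (i + (T - 1)) = 0 := hx _ (by omega)
      have hyv : y (i + (T - 1)) = -q ^ (i + (T - 1) + 1) := by
        have : y (i + (T - 1)) = x (i + (T - 1)) - xstar (i + (T - 1)) := by simp [hy]
        rw [this, hxz, hxstar]; ring
      rw [hyv, neg_pow, ← pow_mul, ← pow_mul, ← pow_add]
      rw [show (-1:ℝ)^2 = 1 by norm_num, one_mul]
      congr 1; omega
    have htv : ∑' i : ℕ, (y (i + (T - 1))) ^ 2 = q ^ (2 * T) * (1 - q ^ 2)⁻¹ := by
      rw [hterm, tsum_mul_left, tsum_geometric_of_lt_one hq2 hq21]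
    have hnorm : q ^ (2 * T) * (1 - q ^ 2)⁻¹ ≤ ‖y‖ ^ 2 := by
      rw [norm_sq_eq y, ← htail, htv]
      have : (0:ℝ) ≤ ∑ i ∈ Finset.range (T - 1), (y i) ^ 2 :=
        Finset.sum_nonneg fun i _ => sq_nonneg _
      linarith
    have h := lower x
    rw [← hy] at h
    have hqT : (0:ℝ) ≤ q ^ (2 * T) := by positivity
    have step : (μ / 2) * q ^ (2 * T) * ‖xstar‖ ^ 2 ≤ (μ / 2) * ‖y‖ ^ 2 := by
      rw [hns]
      calc (μ / 2) * q ^ (2 * T) * (q ^ 2 * (1 - q ^ 2)⁻¹)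
          ≤ (μ / 2) * (q ^ (2 * T) * (1 - q ^ 2)⁻¹) := by
            nlinarith [mul_nonneg (mul_nonneg (mul_nonneg
              (by linarith : (0:ℝ) ≤ μ / 2) hqT) hinv.le)
              (by linarith : (0:ℝ) ≤ 1 - q ^ 2)]
        _ ≤ (μ / 2) * ‖y‖ ^ 2 := by
            nlinarith [mul_nonneg (by linarith : (0:ℝ) ≤ μ / 2)
              (sub_nonneg.2 hnorm)]
    linarith
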